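/- Let A be an n×n nonsingular completely positive matrix (n ≥ 2) whose graph is a tree. Then A has infinitely many minimal CP factorizations. -/

import Mathlib

open Matrix

namespace Stmt6Aux

lemma pair_symm {n : ℕ} : Symmetric (fun b c : Fin n → ℝ => LinearIndependent ℝ ![b, c]) := by
  intro x y h
  rw [LinearIndependent.pair_iff] at h ⊢
  intro s t hst
  have := h t s (by rw [add_comm]; exact hst)
  exact ⟨this.2, this.1⟩

lemma not_pair_self {n : ℕ} (x : Fin n → ℝ) : ¬ LinearIndependent ℝ ![x, x] := by
  intro h
  rw [LinearIndependent.pair_iff] at h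
  have := h 1 (-1) (by module)
  simp at this

lemma exists_smul_of_not_indep {n : ℕ} {x d : Fin n → ℝ} (hd : d ≠ 0)
    (h : ¬ LinearIndependent ℝ ![x, d]) : ∃ a : ℝ, x = a • d := by
  rw [LinearIndependent.pair_iff] at h
  push_neg at h
  obtain ⟨s, t, hst, hne⟩ := h
  by_cases hs : s = 0
  · subst hs
    simp only [zero_smul, zero_add] at hst
    have ht : t ≠ 0 := hne rfl
    exact absurd ((smul_eq_zero.mp hst).resolve_left ht) hd
  · refine ⟨-t / s, ?_⟩
    have h1 : s • x = (-t) • d := by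
      rw [neg_smul]; exact eq_neg_of_add_eq_zero_left hst
    calc x = s⁻¹ • (s • x) := by rw [smul_smul, inv_mul_cancel₀ hs, one_smul]
    _ = s⁻¹ • ((-t) • d) := by rw [h1]
    _ = (-t / s) • d := by rw [smul_smul, div_eq_mul_inv, mul_comm]

lemma msum_apply {n : ℕ} (s : Multiset (Matrix (Fin n) (Fin n) ℝ)) (i j : Fin n) :
    s.sum i j = (s.map fun M => M i j).sum := by
  induction s using Multiset.induction_on with
  | empty => simp
  | cons a s ih => simp [Matrix.add_apply, ih]

lemma fin_sum_list {α : Type*} (l : List α) (f : α → ℝ) :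
    ∑ k : Fin l.length, f (l.get k) = (l.map f).sum := by
  simpa [List.get_eq_getElem] using Fin.sum_univ_get' l f

lemma rot_outer {n : ℕ} (b c : Fin n → ℝ) (t : ℝ) :
    vecMulVec (Real.cos t • b - Real.sin t • c) (Real.cos t • b - Real.sin t • c)
      + vecMulVec (Real.sin t • b + Real.cos t • c) (Real.sin t • b + Real.cos t • c)
      = vecMulVec b b + vecMulVec c c := by
  funext i j
  simp only [Matrix.add_apply, vecMulVec_apply, Pi.add_apply, Pi.sub_apply, Pi.smul_apply,
    smul_eq_mul]
  have h := Real.sin_sq_add_cos_sq t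
  linear_combination (b i * b j + c i * c j) * h

end Stmt6Aux

/-- A CP representation of `A`: a multiset of nonnegative, nonzero, pairwise linearly
independent vectors whose rank-one outer products sum to `A`. Counted as a multiset,
i.e. up to reordering of the summands (columns). -/
def IsCPRep {n : ℕ} (A : Matrix (Fin n) (Fin n) ℝ) (L : Multiset (Fin n → ℝ)) : Prop :=
  (∀ b ∈ L, ∀ i, 0 ≤ b i) ∧ (∀ b ∈ L, b ≠ 0) ∧
  L.Pairwise (fun b c => LinearIndependent ℝ ![b, c]) ∧
  (L.map fun b => vecMulVec b b).sum = A

/-- `A` is completely positive. -/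
def IsCP {n : ℕ} (A : Matrix (Fin n) (Fin n) ℝ) : Prop := ∃ L, IsCPRep A L

/-- The cp-rank: minimal number of rank-one summands in a CP representation. -/
noncomputable def cpRank {n : ℕ} (A : Matrix (Fin n) (Fin n) ℝ) : ℕ :=
  sInf {k | ∃ L, IsCPRep A L ∧ Multiset.card L = k}

/-- A minimal CP representation: a CP representation with `cpRank A` summands. -/
def IsMinCPRep {n : ℕ} (A : Matrix (Fin n) (Fin n) ℝ) (L : Multiset (Fin n → ℝ)) : Prop :=
  IsCPRep A L ∧ Multiset.card L = cpRank A

/-- The graph of a symmetric matrix: `i ~ j` iff `i ≠ j` and `A i j ≠ 0`. -/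
def matGraph {n : ℕ} (A : Matrix (Fin n) (Fin n) ℝ) : SimpleGraph (Fin n) where
  Adj i j := i ≠ j ∧ (A i j ≠ 0 ∨ A j i ≠ 0)
  symm := ⟨fun _ _ h => ⟨h.1.symm, h.2.symm⟩⟩
  loopless := ⟨fun _ h => h.1 rfl⟩

/-- The comparison matrix `M(A)`. -/
noncomputable def compMatrix {n : ℕ} (A : Matrix (Fin n) (Fin n) ℝ) : Matrix (Fin n) (Fin n) ℝ :=
  fun i j => if i = j then |A i j| else -|A i j|

open Stmt6Aux Real Set in
/-- A nonsingular completely positive matrix whose graph is a tree has infinitely many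
minimal CP factorizations. -/
theorem stmt_6 (n : ℕ) (hn : 2 ≤ n) (A : Matrix (Fin n) (Fin n) ℝ)
    (hCP : IsCP A) (hns : A.det ≠ 0) (htree : (matGraph A).IsTree) :
    {L | IsMinCPRep A L}.Infinite := by
  classical
  haveI : Std.Symm (fun b c : Fin n → ℝ => LinearIndependent ℝ ![b, c]) := ⟨fun _ _ h => pair_symm h⟩
  -- a minimal representation exists
  have hSne : {k | ∃ L, IsCPRep A L ∧ Multiset.card L = k}.Nonempty := by
    obtain ⟨L0, h0⟩ := hCP; exact ⟨_, L0, h0, rfl⟩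
  obtain ⟨L, hrep, hcard⟩ := Nat.sInf_mem hSne
  obtain ⟨l, rfl⟩ : ∃ l : List (Fin n → ℝ), L = ↑l := ⟨L.toList, (Multiset.coe_toList L).symm⟩
  set L : Multiset (Fin n → ℝ) := ↑l with hLdef
  obtain ⟨hnn, hnz, hpw, hsum⟩ := hrep
  have hlp : l.Pairwise (fun b c => LinearIndependent ℝ ![b, c]) :=
    Multiset.pairwise_coe_iff_pairwise.mp hpw
  have hnd : l.Nodup := hlp.imp (by rintro a b h rfl; exact not_pair_self a h)
  have hforall : ∀ x ∈ L, ∀ y ∈ L, x ≠ y → LinearIndependent ℝ ![x, y] := by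
    intro x hx y hy hxy
    exact hlp.forall (Multiset.mem_coe.mp hx) (Multiset.mem_coe.mp hy) hxy
  -- entries of A as sums
  have hA : ∀ i j, A i j = (L.map fun b => b i * b j).sum := by
    intro i j
    rw [← hsum, msum_apply, Multiset.map_map]
    rfl
  have hterm : ∀ i j : Fin n, ∀ y ∈ L.map fun b => b i * b j, 0 ≤ y := by
    intro i j y hy
    obtain ⟨x, hx, rfl⟩ := Multiset.mem_map.mp hy
    exact mul_nonneg (hnn x hx i) (hnn x hx j)
  -- adjacency from supports
  have hadj : ∀ x ∈ L, ∀ i j : Fin n, i ≠ j → x i ≠ 0 → x j ≠ 0 → (matGraph A).Adj i j := by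
    intro x hx i j hij hxi hxj
    have h1 : 0 < x i * x j :=
      mul_pos (lt_of_le_of_ne (hnn x hx i) (Ne.symm hxi)) (lt_of_le_of_ne (hnn x hx j) (Ne.symm hxj))
    have h2 : x i * x j ≤ A i j := by
      rw [hA]
      exact Multiset.single_le_sum (hterm i j) _ (Multiset.mem_map_of_mem _ hx)
    exact ⟨hij, Or.inl (h1.trans_le h2).ne'⟩
  -- supports have at most two elements
  have hsupp2 : ∀ x ∈ L, (Finset.univ.filter fun i => x i ≠ 0).card ≤ 2 := by
    intro x hx
    by_contra hgt
    push_neg at hgt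
    obtain ⟨i, j, k, hi, hj, hk, hij, hik, hjk⟩ := Finset.two_lt_card_iff.mp hgt
    rw [Finset.mem_filter] at hi hj hk
    have aij := hadj x hx i j hij hi.2 hj.2
    have aik := hadj x hx i k hik hi.2 hk.2
    have akj := hadj x hx k j (fun h => hjk h.symm) hk.2 hj.2
    obtain ⟨p, hp, hup⟩ := htree.existsUnique_path i j
    have h1 := hup (SimpleGraph.Walk.cons aij SimpleGraph.Walk.nil)
      (by simp [SimpleGraph.Walk.cons_isPath_iff, hij])
    have h2 := hup (SimpleGraph.Walk.cons aik (SimpleGraph.Walk.cons akj SimpleGraph.Walk.nil))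
      (by simp [SimpleGraph.Walk.cons_isPath_iff, hik, hij, Ne.symm hjk])
    have h3 := congrArg SimpleGraph.Walk.length (h1.trans h2.symm)
    simp [SimpleGraph.Walk.length_cons] at h3
  -- every edge is covered
  have hcover : ∀ i j : Fin n, (matGraph A).Adj i j → ∃ x ∈ L, x i ≠ 0 ∧ x j ≠ 0 := by
    intro i j hij
    by_contra hno
    push_neg at hno
    have hz : ∀ (a b : Fin n), (∀ x ∈ L, x a = 0 ∨ x b = 0) → A a b = 0 := by
      intro a b h
      rw [hA]
      apply Multiset.sum_eq_zero
      intro y hy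
      obtain ⟨x, hx, rfl⟩ := Multiset.mem_map.mp hy
      rcases h x hx with h0 | h0 <;> simp [h0]
    have hzz : ∀ x ∈ L, x i = 0 ∨ x j = 0 := by
      intro x hx
      by_cases h0 : x i = 0
      · exact Or.inl h0
      · exact Or.inr (hno x hx h0)
    rcases hij.2 with h | h
    · exact h (hz i j hzz)
    · exact h (hz j i (fun x hx => (hzz x hx).symm))
  -- every vertex has a neighbour
  have hdeg : ∀ i : Fin n, ∃ j, (matGraph A).Adj i j := by
    intro i
    obtain ⟨j, hj⟩ := Fintype.exists_ne_of_one_lt_card (by simp; omega) i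
    obtain ⟨w⟩ := htree.isConnected.preconnected i j
    cases w with
    | nil => exact absurd rfl (Ne.symm hj)
    | cons h p => exact ⟨_, h⟩
  -- the representation has at least n elements
  have hmn : n ≤ l.length := by
    set B : Matrix (Fin n) (Fin l.length) ℝ := fun i k => l.get k i with hB
    have hABB : A = B * Bᵀ := by
      funext i j
      rw [Matrix.mul_apply, hA i j]
      calc (Multiset.map (fun b => b i * b j) L).sum
          = (l.map fun b => b i * b j).sum := rfl
        _ = ∑ k : Fin l.length, l.get k i * l.get k j :=
            (fin_sum_list l (fun x : Fin n → ℝ => x i * x j)).symm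
        _ = ∑ k : Fin l.length, B i k * Bᵀ k j := rfl
    have hU : IsUnit A := (Matrix.isUnit_iff_isUnit_det A).mpr (isUnit_iff_ne_zero.mpr hns)
    have h1 : A.rank = n := by rw [Matrix.rank_of_isUnit A hU, Fintype.card_fin]
    have h2 : A.rank ≤ l.length := by
      rw [hABB]
      exact le_trans (Matrix.rank_mul_le_left B Bᵀ)
        (le_trans B.rank_le_card_width (by simp))
    omega
  -- key: two distinct columns with dominated support
  have key : ∃ b ∈ L, ∃ c ∈ L, b ≠ c ∧ (∀ i, c i ≠ 0 → 0 < b i) := by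
    by_cases hsing : ∃ x ∈ L, (Finset.univ.filter fun i => x i ≠ 0).card ≤ 1
    · -- a singleton-support column exists
      obtain ⟨x, hx, hx1⟩ := hsing
      obtain ⟨i, hxi⟩ : ∃ i, x i ≠ 0 := by
        by_contra h
        push_neg at h
        exact hnz x hx (funext h)
      have hsx : (Finset.univ.filter fun i => x i ≠ 0) = {i} := by
        apply Finset.eq_singleton_iff_unique_mem.mpr
        refine ⟨Finset.mem_filter.mpr ⟨Finset.mem_univ _, hxi⟩, ?_⟩
        intro k hk
        by_contra hki
        have h2 : ({k, i} : Finset (Fin n)) ⊆ Finset.univ.filter fun i => x i ≠ 0 := by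
          intro a ha
          rcases Finset.mem_insert.mp ha with rfl | ha
          · exact hk
          · rw [Finset.mem_singleton] at ha
            subst ha
            exact Finset.mem_filter.mpr ⟨Finset.mem_univ _, hxi⟩
        have := Finset.card_le_card h2
        rw [Finset.card_insert_of_notMem (by simp [hki]), Finset.card_singleton] at this
        omega
      obtain ⟨j, hij⟩ := hdeg i
      obtain ⟨y, hy, hyi, hyj⟩ := hcover i j hij
      have hxj : x j = 0 := by
        by_contra h
        have : j ∈ ({i} : Finset (Fin n)) := hsx ▸ Finset.mem_filter.mpr ⟨Finset.mem_univ _, h⟩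
        exact hij.1 (Finset.mem_singleton.mp this).symm
      refine ⟨y, hy, x, hx, fun h => hyj (h ▸ hxj), ?_⟩
      intro k hk
      have : k ∈ ({i} : Finset (Fin n)) := hsx ▸ Finset.mem_filter.mpr ⟨Finset.mem_univ _, hk⟩
      rw [Finset.mem_singleton] at this
      subst this
      exact lt_of_le_of_ne (hnn y hy k) (Ne.symm hyi)
    · -- all columns have exactly two support elements: pigeonhole over tree edges
      push_neg at hsing
      haveI : Fintype (matGraph A).edgeSet := Fintype.ofFinite _
      have hcardE : (matGraph A).edgeFinset.card + 1 = n := by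
        rw [htree.card_edgeFinset, Fintype.card_fin]
      set i₀ : Fin n := ⟨0, by omega⟩
      set f : (Fin n → ℝ) → Sym2 (Fin n) := fun x =>
        if h : ∃ p : Fin n × Fin n, p.1 ≠ p.2 ∧
            (Finset.univ.filter fun i => x i ≠ 0) = {p.1, p.2} then Sym2.mk h.choose.1 h.choose.2
        else Sym2.mk i₀ i₀ with hf
      have hfspec : ∀ x ∈ L, ∃ a b : Fin n, a ≠ b ∧
          (Finset.univ.filter fun i => x i ≠ 0) = {a, b} ∧ f x = s(a, b) := by
        intro x hx
        have h2 : (Finset.univ.filter fun i => x i ≠ 0).card = 2 := by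
          have := hsupp2 x hx
          have := hsing x hx
          omega
        obtain ⟨a, b, hab, hs⟩ := Finset.card_eq_two.mp h2
        have hcond : ∃ p : Fin n × Fin n, p.1 ≠ p.2 ∧
            (Finset.univ.filter fun i => x i ≠ 0) = {p.1, p.2} := ⟨(a, b), hab, hs⟩
        refine ⟨hcond.choose.1, hcond.choose.2, hcond.choose_spec.1, hcond.choose_spec.2, ?_⟩
        rw [hf]
        simp only [dif_pos hcond]
      have hmaps : ∀ x ∈ l.toFinset, f x ∈ (matGraph A).edgeFinset := by
        intro x hx
        have hxL : x ∈ L := Multiset.mem_coe.mpr (List.mem_toFinset.mp hx)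
        obtain ⟨a, b, hab, hs, hfx⟩ := hfspec x hxL
        have ha : x a ≠ 0 := by
          have : a ∈ Finset.univ.filter fun i => x i ≠ 0 := hs ▸ by simp
          exact (Finset.mem_filter.mp this).2
        have hb : x b ≠ 0 := by
          have : b ∈ Finset.univ.filter fun i => x i ≠ 0 := hs ▸ by simp
          exact (Finset.mem_filter.mp this).2
        rw [hfx, SimpleGraph.mem_edgeFinset, SimpleGraph.mem_edgeSet]
        exact hadj x hxL a b hab ha hb
      have hlt : (matGraph A).edgeFinset.card < l.toFinset.card := by
        rw [List.toFinset_card_of_nodup hnd]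
        omega
      obtain ⟨x, hxs, y, hys, hxy, hfxy⟩ :=
        Finset.exists_ne_map_eq_of_card_lt_of_maps_to hlt hmaps
      have hxL : x ∈ L := Multiset.mem_coe.mpr (List.mem_toFinset.mp hxs)
      have hyL : y ∈ L := Multiset.mem_coe.mpr (List.mem_toFinset.mp hys)
      obtain ⟨a, b, hab, hsx, hfx⟩ := hfspec x hxL
      obtain ⟨a', b', hab', hsy, hfy⟩ := hfspec y hyL
      have hss : (Finset.univ.filter fun i => x i ≠ 0) =
          (Finset.univ.filter fun i => y i ≠ 0) := by
        rw [hsx, hsy]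
        have : s(a, b) = s(a', b') := by rw [← hfx, ← hfy, hfxy]
        rcases Sym2.eq_iff.mp this with ⟨rfl, rfl⟩ | ⟨rfl, rfl⟩
        · rfl
        · exact Finset.pair_comm a b
      refine ⟨x, hxL, y, hyL, hxy, ?_⟩
      intro k hk
      have : k ∈ Finset.univ.filter fun i => x i ≠ 0 := by
        rw [hss]
        exact Finset.mem_filter.mpr ⟨Finset.mem_univ _, hk⟩
      exact lt_of_le_of_ne (hnn x hxL k) (Ne.symm (Finset.mem_filter.mp this).2)
  obtain ⟨b, hbL, c, hcL, hbc, hdom⟩ := key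
  have hbne : b ≠ 0 := hnz b hbL
  have hcne : c ≠ 0 := hnz c hcL
  have hbcInd : LinearIndependent ℝ ![b, c] := hforall b hbL c hcL hbc
  set M : Multiset (Fin n → ℝ) := (L.erase b).erase c with hMdef
  have hcEb : c ∈ L.erase b := (Multiset.mem_erase_of_ne (Ne.symm hbc)).mpr hcL
  have hM : b ::ₘ c ::ₘ M = L := by
    rw [hMdef, Multiset.cons_erase hcEb, Multiset.cons_erase hbL]
  have hMsub : ∀ d ∈ M, d ∈ L := fun d hd => by
    rw [← hM]; exact Multiset.mem_cons_of_mem (Multiset.mem_cons_of_mem hd)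
  set m0 : List (Fin n → ℝ) := (l.erase b).erase c with hm0
  have hMl : M = ↑m0 := by
    rw [hMdef, hm0]
    show ((↑l : Multiset _).erase b).erase c = _
    rw [Multiset.coe_erase, Multiset.coe_erase]
  have hm0p : m0.Pairwise (fun b c => LinearIndependent ℝ ![b, c]) :=
    hlp.sublist ((List.erase_sublist (a := c) (l := l.erase b)).trans (List.erase_sublist (a := b) (l := l)))
  -- the threshold δ
  have hupne : (Finset.univ : Finset (Fin n)).Nonempty := ⟨⟨0, by omega⟩, Finset.mem_univ _⟩
  set δ : ℝ := Finset.univ.inf' hupne (fun i => if c i = 0 then 1 else b i / c i) with hδ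
  have hδpos : 0 < δ := by
    rw [hδ, Finset.lt_inf'_iff]
    intro i _
    by_cases h : c i = 0
    · simp [h]
    · simp only [h, if_false]
      exact div_pos (hdom i h) (lt_of_le_of_ne (hnn c hcL i) (Ne.symm h))
  have hδle : ∀ i, δ * c i ≤ b i := by
    intro i
    by_cases h : c i = 0
    · rw [h, mul_zero]; exact hnn b hbL i
    · have hci : 0 < c i := lt_of_le_of_ne (hnn c hcL i) (Ne.symm h)
      have h1 : δ ≤ b i / c i := by
        refine le_trans (Finset.inf'_le _ (Finset.mem_univ i)) ?_
        simp [h]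
      calc δ * c i ≤ (b i / c i) * c i := mul_le_mul_of_nonneg_right h1 hci.le
      _ = b i := by field_simp
  set ε : ℝ := min (Real.pi/4) (Real.arctan δ) with hε
  have harc : 0 < Real.arctan δ := by
    have := Real.arctan_strictMono hδpos
    rwa [Real.arctan_zero] at this
  have hεpos : 0 < ε := lt_min (by positivity) harc
  have hεπ : ε ≤ Real.pi/4 := min_le_left _ _
  set bv : ℝ → (Fin n → ℝ) := fun t => Real.cos t • b - Real.sin t • c with hbv
  set cv : ℝ → (Fin n → ℝ) := fun t => Real.sin t • b + Real.cos t • c with hcv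
  have hcosp : ∀ t ∈ Ioo (0:ℝ) ε, 0 < Real.cos t := by
    intro t ht
    apply Real.cos_pos_of_mem_Ioo
    constructor
    · linarith [ht.1, Real.pi_pos]
    · linarith [ht.2, hεπ, Real.pi_pos]
  have hsinp : ∀ t ∈ Ioo (0:ℝ) ε, 0 < Real.sin t := fun t ht =>
    Real.sin_pos_of_pos_of_lt_pi ht.1 (by linarith [ht.2, hεπ, Real.pi_pos])
  have htanδ : ∀ t ∈ Ioo (0:ℝ) ε, Real.sin t < δ * Real.cos t := by
    intro t ht
    have h1 : Real.tan t < δ := by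
      have h2 : Real.tan t < Real.tan (Real.arctan δ) :=
        Real.tan_lt_tan_of_nonneg_of_lt_pi_div_two ht.1.le
          (Real.arctan_lt_pi_div_two δ) (lt_of_lt_of_le ht.2 (min_le_right _ _))
      rwa [Real.tan_arctan] at h2
    have h3 : Real.sin t = Real.tan t * Real.cos t := by
      rw [Real.tan_eq_sin_div_cos]
      field_simp [(hcosp t ht).ne']
    rw [h3]
    exact mul_lt_mul_of_pos_right h1 (hcosp t ht)
  have hbvnn : ∀ t ∈ Ioo (0:ℝ) ε, ∀ i, 0 ≤ bv t i := by
    intro t ht i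
    simp only [hbv, Pi.sub_apply, Pi.smul_apply, smul_eq_mul]
    by_cases h : c i = 0
    · rw [h, mul_zero, sub_zero]
      exact mul_nonneg (hcosp t ht).le (hnn b hbL i)
    · have hci : 0 < c i := lt_of_le_of_ne (hnn c hcL i) (Ne.symm h)
      have h4 : Real.sin t * c i ≤ (δ * Real.cos t) * c i :=
        mul_le_mul_of_nonneg_right (htanδ t ht).le hci.le
      have h5 : δ * c i ≤ b i := hδle i
      nlinarith [(hcosp t ht).le]
  have hcvnn : ∀ t ∈ Ioo (0:ℝ) ε, ∀ i, 0 ≤ cv t i := by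
    intro t ht i
    simp only [hcv, Pi.add_apply, Pi.smul_apply, smul_eq_mul]
    have := hnn b hbL i
    have := hnn c hcL i
    nlinarith [(hcosp t ht).le, (hsinp t ht).le]
  have hbv0 : ∀ t ∈ Ioo (0:ℝ) ε, bv t ≠ 0 := by
    intro t ht h0
    have hk : Real.cos t • b + (-Real.sin t) • c = bv t := by
      simp only [hbv]; module
    rw [h0] at hk
    exact (hcosp t ht).ne' (LinearIndependent.pair_iff.mp hbcInd _ _ hk).1
  have hcv0 : ∀ t ∈ Ioo (0:ℝ) ε, cv t ≠ 0 := by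
    intro t ht h0
    have hk : Real.sin t • b + Real.cos t • c = cv t := by
      simp only [hcv]
    rw [h0] at hk
    exact (hsinp t ht).ne' (LinearIndependent.pair_iff.mp hbcInd _ _ hk).1
  have hbvcv : ∀ t ∈ Ioo (0:ℝ) ε, LinearIndependent ℝ ![bv t, cv t] := by
    intro t ht
    rw [LinearIndependent.pair_iff]
    intro s u hsu
    have hk : (s * Real.cos t + u * Real.sin t) • b + (u * Real.cos t - s * Real.sin t) • c
        = s • bv t + u • cv t := by
      simp only [hbv, hcv]; module
    rw [hsu] at hk
    obtain ⟨e1, e2⟩ := LinearIndependent.pair_iff.mp hbcInd _ _ hk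
    have hpy := Real.sin_sq_add_cos_sq t
    constructor
    · linear_combination Real.cos t * e1 - Real.sin t * e2 - s * hpy
    · linear_combination Real.sin t * e1 + Real.cos t * e2 - u * hpy
  have hsame : ∀ t ∈ Ioo (0:ℝ) ε, ∀ t' ∈ Ioo (0:ℝ) ε, ∀ k : ℝ,
      Real.cos t' = k * Real.cos t → Real.sin t' = k * Real.sin t → t = t' := by
    intro t ht t' ht' k hc hs
    by_contra hne
    rcases lt_or_gt_of_ne hne with hlt | hlt
    · have h0 : Real.sin (t' - t) = 0 := by
        rw [Real.sin_sub, hc, hs]; ring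
      exact (Real.sin_pos_of_pos_of_lt_pi (by linarith)
        (by linarith [ht'.2, ht.1, hεπ, Real.pi_pos])).ne' h0
    · have h0 : Real.sin (t - t') = 0 := by
        rw [Real.sin_sub, hc, hs]; ring
      exact (Real.sin_pos_of_pos_of_lt_pi (by linarith)
        (by linarith [ht.2, ht'.1, hεπ, Real.pi_pos])).ne' h0
  -- the set of bad parameters is finite
  set Bad : Set ℝ := {t | t ∈ Ioo (0:ℝ) ε ∧ ∃ d ∈ M,
      ¬ LinearIndependent ℝ ![bv t, d] ∨ ¬ LinearIndependent ℝ ![cv t, d]} with hBad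
  have hBadFin : Bad.Finite := by
    have hsub : Bad ⊆ ⋃ d ∈ M.toFinset,
        ({t | t ∈ Ioo (0:ℝ) ε ∧ ¬ LinearIndependent ℝ ![bv t, d]} ∪
         {t | t ∈ Ioo (0:ℝ) ε ∧ ¬ LinearIndependent ℝ ![cv t, d]}) := by
      rintro t ⟨ht, d, hd, hcase⟩
      refine Set.mem_biUnion (Multiset.mem_toFinset.mpr hd) ?_
      rcases hcase with h | h
      · exact Or.inl ⟨ht, h⟩
      · exact Or.inr ⟨ht, h⟩
    refine Set.Finite.subset (Set.Finite.biUnion (M.toFinset.finite_toSet) ?_) hsub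
    intro d hd
    have hdL := hMsub d (Multiset.mem_toFinset.mp hd)
    have hd0 : d ≠ 0 := hnz d hdL
    apply Set.Finite.union
    · apply Set.Subsingleton.finite
      rintro t ⟨ht, hti⟩ t' ⟨ht', hti'⟩
      obtain ⟨a, ha⟩ := exists_smul_of_not_indep hd0 hti
      obtain ⟨a', ha'⟩ := exists_smul_of_not_indep hd0 hti'
      have ha0 : a ≠ 0 := by
        rintro rfl
        rw [zero_smul] at ha
        exact hbv0 t ht ha
      have hE : bv t' = (a'/a) • bv t := by
        rw [ha, ha', smul_smul, div_mul_cancel₀ _ ha0]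
      have hE2 : (Real.cos t' - (a'/a) * Real.cos t) • b +
          ((a'/a) * Real.sin t - Real.sin t') • c = 0 := by
        have hk : (Real.cos t' - (a'/a) * Real.cos t) • b +
            ((a'/a) * Real.sin t - Real.sin t') • c = bv t' - (a'/a) • bv t := by
          simp only [hbv]; module
        rw [hk, hE, sub_self]
      obtain ⟨e1, e2⟩ := LinearIndependent.pair_iff.mp hbcInd _ _ hE2
      exact hsame t ht t' ht' (a'/a) (by linarith) (by linarith)
    · apply Set.Subsingleton.finite
      rintro t ⟨ht, hti⟩ t' ⟨ht', hti'⟩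
      obtain ⟨a, ha⟩ := exists_smul_of_not_indep hd0 hti
      obtain ⟨a', ha'⟩ := exists_smul_of_not_indep hd0 hti'
      have ha0 : a ≠ 0 := by
        rintro rfl
        rw [zero_smul] at ha
        exact hcv0 t ht ha
      have hE : cv t' = (a'/a) • cv t := by
        rw [ha, ha', smul_smul, div_mul_cancel₀ _ ha0]
      have hE2 : (Real.sin t' - (a'/a) * Real.sin t) • b +
          (Real.cos t' - (a'/a) * Real.cos t) • c = 0 := by
        have hk : (Real.sin t' - (a'/a) * Real.sin t) • b +
            (Real.cos t' - (a'/a) * Real.cos t) • c = cv t' - (a'/a) • cv t := by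
          simp only [hcv]; module
        rw [hk, hE, sub_self]
      obtain ⟨e1, e2⟩ := LinearIndependent.pair_iff.mp hbcInd _ _ hE2
      exact hsame t ht t' ht' (a'/a) (by linarith) (by linarith)
  set T : Set ℝ := Ioo (0:ℝ) ε \ Bad with hT
  have hTinf : T.Infinite := (Set.Ioo_infinite hεpos).diff hBadFin
  have hTI : ∀ t ∈ T, t ∈ Ioo (0:ℝ) ε := fun t ht => ht.1
  have hgood : ∀ t ∈ T, ∀ d ∈ M,
      LinearIndependent ℝ ![bv t, d] ∧ LinearIndependent ℝ ![cv t, d] := by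
    intro t ht d hd
    constructor
    · by_contra h; exact ht.2 ⟨ht.1, d, hd, Or.inl h⟩
    · by_contra h; exact ht.2 ⟨ht.1, d, hd, Or.inr h⟩
  set F : ℝ → Multiset (Fin n → ℝ) := fun t => bv t ::ₘ cv t ::ₘ M with hF
  have hFmin : ∀ t ∈ T, IsMinCPRep A (F t) := by
    intro t ht
    have htI := hTI t ht
    constructor
    · refine ⟨?_, ?_, ?_, ?_⟩
      · intro x hx i
        rcases Multiset.mem_cons.mp hx with rfl | hx
        · exact hbvnn t htI i
        rcases Multiset.mem_cons.mp hx with rfl | hx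
        · exact hcvnn t htI i
        · exact hnn x (hMsub x hx) i
      · intro x hx
        rcases Multiset.mem_cons.mp hx with rfl | hx
        · exact hbv0 t htI
        rcases Multiset.mem_cons.mp hx with rfl | hx
        · exact hcv0 t htI
        · exact hnz x (hMsub x hx)
      · have hcoe : F t = ↑(bv t :: cv t :: m0) := by
          rw [hF]
          simp only [hMl, Multiset.cons_coe]
        rw [hcoe, Multiset.pairwise_coe_iff_pairwise]
        refine List.pairwise_cons.mpr ⟨?_, List.pairwise_cons.mpr ⟨?_, hm0p⟩⟩
        · intro y hy
          rcases List.mem_cons.mp hy with rfl | hy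
          · exact hbvcv t htI
          · exact (hgood t ht y (by rw [hMl]; exact Multiset.mem_coe.mpr hy)).1
        · intro y hy
          exact (hgood t ht y (by rw [hMl]; exact Multiset.mem_coe.mpr hy)).2
      · have hsum' : vecMulVec b b + (vecMulVec c c +
            (M.map fun x => vecMulVec x x).sum) = A := by
          rw [← hsum, ← hM]
          simp [Multiset.sum_cons]
        rw [hF]
        simp only [Multiset.map_cons, Multiset.sum_cons]
        rw [← hsum', ← add_assoc, ← add_assoc]
        congr 1
        have := rot_outer b c t
        simp only [hbv, hcv]
        exact this
    · have h1 : Multiset.card (F t) = Multiset.card L := by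
        rw [hF, ← hM]
        simp
      rw [h1]
      exact hcard
  have hFinj : Set.InjOn F T := by
    intro t ht t' ht' hEq
    have h1 : bv t ∈ F t' := by
      rw [← hEq, hF]
      exact Multiset.mem_cons_self _ _
    rw [hF] at h1
    rcases Multiset.mem_cons.mp h1 with h2 | h1
    · have hE2 : (Real.cos t - Real.cos t') • b + (Real.sin t' - Real.sin t) • c = 0 := by
        have hk : (Real.cos t - Real.cos t') • b + (Real.sin t' - Real.sin t) • c
            = bv t - bv t' := by simp only [hbv]; module
        rw [hk, h2, sub_self]
      obtain ⟨e1, e2⟩ := LinearIndependent.pair_iff.mp hbcInd _ _ hE2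
      have hc : Real.cos t = Real.cos t' := by linarith
      have htI := hTI t ht
      have htI' := hTI t' ht'
      exact Real.injOn_cos ⟨htI.1.le, by linarith [htI.2, hεπ, Real.pi_pos]⟩
        ⟨htI'.1.le, by linarith [htI'.2, hεπ, Real.pi_pos]⟩ hc
    rcases Multiset.mem_cons.mp h1 with h2 | h1
    · exfalso
      have hE2 : (Real.cos t - Real.sin t') • b + (-Real.sin t - Real.cos t') • c = 0 := by
        have hk : (Real.cos t - Real.sin t') • b + (-Real.sin t - Real.cos t') • c
            = bv t - cv t' := by simp only [hbv, hcv]; module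
        rw [hk, h2, sub_self]
      obtain ⟨e1, e2⟩ := LinearIndependent.pair_iff.mp hbcInd _ _ hE2
      have := hsinp t (hTI t ht)
      have := hcosp t' (hTI t' ht')
      linarith
    · exact absurd (hgood t ht _ h1).1 (not_pair_self _)
  refine Set.Infinite.mono ?_ (hTinf.image hFinj)
  rintro x ⟨t, ht, rfl⟩
  exact hFmin t ht
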